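/- Let X be a Prisoner's-Dilemma-type 2×2 game: the payoff matrices satisfy b_{ij} = a_{ji} for all i,j (the game is symmetric), and a_{21} > a_{11} > a_{22} > a_{12}. Then the joint distribution p = (1,0,0,0), corresponding to both players cooperating, is a dependency equilibrium of X. -/

import Mathlib

open Filter Topology

/-- `p = (p11, p12, p21, p22)` is a dependency equilibrium of the `2 × 2` game with
payoff matrices `A = (aᵢⱼ)` and `B = (bᵢⱼ)`: there is a sequence of totally mixed joint
distributions converging to `p` along which all four conditional expected payoffs
converge, and the limits satisfy the appropriate inequalities. -/
def IsDependencyEquilibrium (a11 a12 a21 a22 b11 b12 b21 b22 p11 p12 p21 p22 : ℝ) : Prop :=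
  ∃ q11 q12 q21 q22 : ℕ → ℝ, ∃ L1 L2 M1 M2 : ℝ,
    (∀ r, 0 < q11 r ∧ 0 < q12 r ∧ 0 < q21 r ∧ 0 < q22 r ∧
      q11 r + q12 r + q21 r + q22 r = 1) ∧
    Tendsto q11 atTop (𝓝 p11) ∧ Tendsto q12 atTop (𝓝 p12) ∧
    Tendsto q21 atTop (𝓝 p21) ∧ Tendsto q22 atTop (𝓝 p22) ∧
    Tendsto (fun r => (a11 * q11 r + a12 * q12 r) / (q11 r + q12 r)) atTop (𝓝 L1) ∧
    Tendsto (fun r => (a21 * q21 r + a22 * q22 r) / (q21 r + q22 r)) atTop (𝓝 L2) ∧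
    Tendsto (fun r => (b11 * q11 r + b21 * q21 r) / (q11 r + q21 r)) atTop (𝓝 M1) ∧
    Tendsto (fun r => (b12 * q12 r + b22 * q22 r) / (q12 r + q22 r)) atTop (𝓝 M2) ∧
    (p11 + p12 ≠ 0 → L2 ≤ L1) ∧ (p21 + p22 ≠ 0 → L1 ≤ L2) ∧
    (p11 + p21 ≠ 0 → M2 ≤ M1) ∧ (p12 + p22 ≠ 0 → M1 ≤ M2)

/-- For a Prisoner's-Dilemma-type `2 × 2` game (symmetric: `bᵢⱼ = aⱼᵢ`, with
`a21 > a11 > a22 > a12`), the joint distribution `(1, 0, 0, 0)`, corresponding to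
both players cooperating, is a dependency equilibrium. -/
theorem cooperate_isDependencyEquilibrium_of_prisonersDilemma
    (a11 a12 a21 a22 b11 b12 b21 b22 : ℝ)
    (hb11 : b11 = a11) (hb12 : b12 = a21) (hb21 : b21 = a12) (hb22 : b22 = a22)
    (h1 : a21 > a11) (h2 : a11 > a22) (h3 : a22 > a12) :
    IsDependencyEquilibrium a11 a12 a21 a22 b11 b12 b21 b22 1 0 0 0 := by
  rw [hb11, hb12, hb21, hb22]
  set ε : ℕ → ℝ := fun r => 1 / (r + 3) with hεdef
  have hε0 : ∀ r, 0 < ε r := fun r => by positivity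
  have hεle : ∀ r, ε r ≤ 1 / 3 := by
    intro r
    apply div_le_div_of_nonneg_left (by norm_num) (by norm_num)
    have : (0:ℝ) ≤ (r:ℝ) := Nat.cast_nonneg r
    linarith
  have hεlim : Tendsto ε atTop (𝓝 0) := by
    have h : Tendsto (fun r : ℕ => (r : ℝ) + 3) atTop atTop :=
      tendsto_atTop_add_const_right atTop 3 tendsto_natCast_atTop_atTop
    exact h.inv_tendsto_atTop.congr (fun r => by simp [hεdef, one_div, Pi.inv_apply])
  refine ⟨fun r => 1 - ε r - 2 * (ε r)^2, fun r => (ε r)^2, fun r => (ε r)^2, ε,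
    a11, a22, a11, a22, ?_, ?_, ?_, ?_, ?_, ?_, ?_, ?_, ?_, ?_, ?_, ?_, ?_⟩
  · intro r
    have h0 := hε0 r
    have hle := hεle r
    refine ⟨?_, by positivity, by positivity, h0, by ring⟩
    show (0:ℝ) < 1 - ε r - 2 * (ε r)^2
    nlinarith [mul_le_mul hle hle h0.le (by norm_num : (0:ℝ) ≤ 1/3)]
  · have : Tendsto (fun r => 1 - ε r - 2 * (ε r)^2) atTop (𝓝 (1 - 0 - 2 * 0^2)) :=
      (tendsto_const_nhds.sub hεlim).sub ((hεlim.pow 2).const_mul 2)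
    simpa using this
  · simpa using hεlim.pow 2
  · simpa using hεlim.pow 2
  · exact hεlim
  · -- L1
    have : Tendsto (fun r => (a11 * (1 - ε r - 2 * (ε r)^2) + a12 * (ε r)^2) /
        ((1 - ε r - 2 * (ε r)^2) + (ε r)^2)) atTop
        (𝓝 ((a11 * (1 - 0 - 2 * 0^2) + a12 * 0^2) / ((1 - 0 - 2 * 0^2) + 0^2))) := by
      apply Tendsto.div
      · exact ((tendsto_const_nhds.mul
          ((tendsto_const_nhds.sub hεlim).sub ((hεlim.pow 2).const_mul 2))).add
          (tendsto_const_nhds.mul (hεlim.pow 2)))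
      · exact ((tendsto_const_nhds.sub hεlim).sub ((hεlim.pow 2).const_mul 2)).add
          (hεlim.pow 2)
      · norm_num
    simpa using this
  · -- L2
    have key : ∀ r, (a21 * (ε r)^2 + a22 * ε r) / ((ε r)^2 + ε r)
        = (a21 * ε r + a22) / (ε r + 1) := by
      intro r
      have h0 := (hε0 r).ne'
      rw [show a21 * (ε r)^2 + a22 * ε r = ε r * (a21 * ε r + a22) by ring,
        show (ε r)^2 + ε r = ε r * (ε r + 1) by ring,
        mul_div_mul_left _ _ h0]
    have : Tendsto (fun r => (a21 * ε r + a22) / (ε r + 1)) atTop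
        (𝓝 ((a21 * 0 + a22) / (0 + 1))) := by
      apply Tendsto.div ((tendsto_const_nhds.mul hεlim).add tendsto_const_nhds)
        (hεlim.add tendsto_const_nhds) (by norm_num)
    have := this.congr (fun r => (key r).symm)
    simpa using this
  · -- M1
    have : Tendsto (fun r => (a11 * (1 - ε r - 2 * (ε r)^2) + a12 * (ε r)^2) /
        ((1 - ε r - 2 * (ε r)^2) + (ε r)^2)) atTop
        (𝓝 ((a11 * (1 - 0 - 2 * 0^2) + a12 * 0^2) / ((1 - 0 - 2 * 0^2) + 0^2))) := by
      apply Tendsto.div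
      · exact ((tendsto_const_nhds.mul
          ((tendsto_const_nhds.sub hεlim).sub ((hεlim.pow 2).const_mul 2))).add
          (tendsto_const_nhds.mul (hεlim.pow 2)))
      · exact ((tendsto_const_nhds.sub hεlim).sub ((hεlim.pow 2).const_mul 2)).add
          (hεlim.pow 2)
      · norm_num
    simpa using this
  · -- M2
    have key : ∀ r, (a21 * (ε r)^2 + a22 * ε r) / ((ε r)^2 + ε r)
        = (a21 * ε r + a22) / (ε r + 1) := by
      intro r
      have h0 := (hε0 r).ne'
      rw [show a21 * (ε r)^2 + a22 * ε r = ε r * (a21 * ε r + a22) by ring,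
        show (ε r)^2 + ε r = ε r * (ε r + 1) by ring,
        mul_div_mul_left _ _ h0]
    have : Tendsto (fun r => (a21 * ε r + a22) / (ε r + 1)) atTop
        (𝓝 ((a21 * 0 + a22) / (0 + 1))) := by
      apply Tendsto.div ((tendsto_const_nhds.mul hεlim).add tendsto_const_nhds)
        (hεlim.add tendsto_const_nhds) (by norm_num)
    have := this.congr (fun r => (key r).symm)
    simpa using this
  · exact fun _ => le_of_lt h2
  · intro h; exact absurd (by norm_num : (0:ℝ) + 0 = 0) h
  · exact fun _ => le_of_lt h2
  · intro h; exact absurd (by norm_num : (0:ℝ) + 0 = 0) h
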